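/- Let (E_n) be K-geodesically convex lower semicontinuous functionals on a metric space X, Γ-converging to a K-geodesically convex functional E_∞. Then for every x ∈ D(E_∞) and every sequence x_n → x, one has |∂⁻E_∞|(x) ≤ liminf_n |∂⁻E_n|(x_n); i.e., the slopes satisfy the Γ-liminf inequality on D(E_∞). -/

import Mathlib

open Filter Topology MeasureTheory Set Metric
open scoped ENNReal NNReal

/-- The Γ-liminf of a sequence of extended-real-valued functionals on a metric space. -/
noncomputable def gammaLiminf {X : Type*} [MetricSpace X] (E : ℕ → X → EReal) (x : X) : EReal :=
  ⨅ (u : ℕ → X) (_ : Tendsto u atTop (𝓝 x)), Filter.liminf (fun n => E n (u n)) atTop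

/-- The Γ-limsup of a sequence of extended-real-valued functionals on a metric space. -/
noncomputable def gammaLimsup {X : Type*} [MetricSpace X] (E : ℕ → X → EReal) (x : X) : EReal :=
  ⨅ (u : ℕ → X) (_ : Tendsto u atTop (𝓝 x)), Filter.limsup (fun n => E n (u n)) atTop

open Classical in
/-- The descending slope `|∂⁻E|(x)`, set to `+∞` outside the effective domain. -/
noncomputable def descendingSlope {X : Type*} [MetricSpace X] (E : X → EReal) (x : X) : ℝ≥0∞ :=
  if E x = ⊤ then ⊤
  else Filter.limsup (fun y => ENNReal.ofReal ((E x - E y).toReal / dist x y)) (𝓝[≠] x)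

/-- `K`-geodesic convexity. -/
def KGeodConvex {X : Type*} [MetricSpace X] (K : ℝ) (E : X → EReal) : Prop :=
  ∀ x y : X, E x ≠ ⊤ → E y ≠ ⊤ → ∃ γ : ℝ → X, γ 0 = x ∧ γ 1 = y ∧
    (∀ t ∈ Icc (0:ℝ) 1, ∀ s ∈ Icc (0:ℝ) 1, dist (γ t) (γ s) = |s - t| * dist x y) ∧
    ∀ t ∈ Icc (0:ℝ) 1,
      E (γ t) ≤ ((1 - t : ℝ) : EReal) * E x + (t : EReal) * E y
        - (((K / 2) * t * (1 - t) * dist x y ^ 2 : ℝ) : EReal)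

lemma slope_ge_of_KGeodConvex {X : Type*} [MetricSpace X] {K : ℝ} {E : X → EReal}
    (hK : KGeodConvex K E) (hbot : ∀ z, E z ≠ ⊥) {x y : X}
    (hx : E x ≠ ⊤) (hy : E y ≠ ⊤) (hxy : x ≠ y) :
    ENNReal.ofReal (((E x).toReal - (E y).toReal) / dist x y + K / 2 * dist x y)
      ≤ descendingSlope E x := by
  set a := (E x).toReal with ha
  set b := (E y).toReal with hb
  set d := dist x y with hd
  have hd0 : 0 < d := dist_pos.mpr hxy
  have hEx : E x = (a : EReal) := (EReal.coe_toReal hx (hbot x)).symm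
  have hEy : E y = (b : EReal) := (EReal.coe_toReal hy (hbot y)).symm
  obtain ⟨γ, hγ0, hγ1, hγd, hγE⟩ := hK x y hx hy
  set t : ℕ → ℝ := fun k => ((k : ℝ) + 2)⁻¹ with ht
  have ht0 : ∀ k, 0 < t k := fun k => by positivity
  have ht1 : ∀ k, t k < 1 := fun k => by
    rw [ht]
    rw [inv_lt_one_iff₀]
    right; linarith [Nat.cast_nonneg (α := ℝ) k]
  have htmem : ∀ k, t k ∈ Icc (0:ℝ) 1 := fun k => ⟨(ht0 k).le, (ht1 k).le⟩
  have htend : Tendsto t atTop (𝓝 0) := by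
    apply Tendsto.inv_tendsto_atTop
    exact tendsto_atTop_add_const_right _ _ tendsto_natCast_atTop_atTop
  set z : ℕ → X := fun k => γ (t k) with hz
  have hdz : ∀ k, dist x (z k) = t k * d := by
    intro k
    have := hγd 0 ⟨le_refl 0, zero_le_one⟩ (t k) (htmem k)
    rw [hγ0] at this
    rw [hz]
    simpa [abs_of_pos (ht0 k)] using this
  have hzx : ∀ k, z k ≠ x := by
    intro k h
    have := hdz k
    rw [dist_comm, h, dist_self] at this
    nlinarith [ht0 k, hd0]
  have hztend : Tendsto z atTop (𝓝[≠] x) := by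
    apply tendsto_nhdsWithin_of_tendsto_nhds_of_eventually_within
    · rw [tendsto_iff_dist_tendsto_zero]
      have : (fun k => dist (z k) x) = fun k => t k * d := by
        ext k; rw [dist_comm]; exact hdz k
      rw [this]
      simpa using htend.mul_const d
    · exact Eventually.of_forall hzx
  -- pointwise lower bound
  set w : ℕ → ℝ := fun k => (a - b) / d + K / 2 * (1 - t k) * d with hw
  have key : ∀ k, ENNReal.ofReal (w k)
      ≤ ENNReal.ofReal ((E x - E (z k)).toReal / dist x (z k)) := by
    intro k
    apply ENNReal.ofReal_le_ofReal
    have hzE := hγE (t k) (htmem k)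
    rw [hEx, hEy] at hzE
    have hrhs : ((1 - t k : ℝ) : EReal) * (a : EReal) + ((t k : ℝ) : EReal) * (b : EReal)
        - (((K / 2) * t k * (1 - t k) * d ^ 2 : ℝ) : EReal)
        = (((1 - t k) * a + t k * b - (K / 2) * t k * (1 - t k) * d ^ 2 : ℝ) : EReal) := by
      rw [← EReal.coe_mul, ← EReal.coe_mul, ← EReal.coe_add, ← EReal.coe_sub]
    rw [hrhs] at hzE
    have hztop : E (z k) ≠ ⊤ := by
      intro h; rw [h] at hzE; exact not_le.mpr (EReal.coe_lt_top _) hzE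
    have hzr : (E (z k)).toReal ≤ (1 - t k) * a + t k * b - (K / 2) * t k * (1 - t k) * d ^ 2 := by
      have := EReal.toReal_le_toReal hzE (hbot (z k)) (EReal.coe_ne_top _)
      rwa [EReal.toReal_coe] at this
    have hsub : (E x - E (z k)).toReal = a - (E (z k)).toReal := by
      rw [EReal.toReal_sub hx (hbot x) hztop (hbot (z k))]
    rw [hsub, hdz k]
    have hnum : t k * (a - b) + (K / 2) * t k * (1 - t k) * d ^ 2 ≤ a - (E (z k)).toReal := by
      nlinarith [hzr]
    have heq : w k = (t k * (a - b) + (K / 2) * t k * (1 - t k) * d ^ 2) / (t k * d) := by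
      rw [hw]
      have htk : t k ≠ 0 := (ht0 k).ne'
      field_simp
    rw [heq]
    gcongr
  -- combine
  rw [descendingSlope, if_neg hx]
  set f : X → ℝ≥0∞ := fun p => ENNReal.ofReal ((E x - E p).toReal / dist x p) with hf
  have h1 : Filter.limsup (f ∘ z) atTop ≤ Filter.limsup f (𝓝[≠] x) := by
    rw [Filter.limsup_comp]
    exact Filter.limsup_le_limsup_of_le hztend
  have h2 : Filter.liminf (fun k => ENNReal.ofReal (w k)) atTop
      ≤ Filter.liminf (f ∘ z) atTop :=
    Filter.liminf_le_liminf (Eventually.of_forall key)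
  have h3 : Filter.liminf (fun k => ENNReal.ofReal (w k)) atTop
      = ENNReal.ofReal ((a - b) / d + K / 2 * d) := by
    apply Filter.Tendsto.liminf_eq
    apply (ENNReal.continuous_ofReal.tendsto _).comp
    have : Tendsto w atTop (𝓝 ((a - b) / d + K / 2 * (1 - 0) * d)) := by
      apply Tendsto.const_add
      exact (((tendsto_const_nhds.sub htend).const_mul _).mul_const _)
    simpa using this
  calc ENNReal.ofReal ((a - b) / d + K / 2 * d) = _ := h3.symm
    _ ≤ Filter.liminf (f ∘ z) atTop := h2
    _ ≤ Filter.limsup (f ∘ z) atTop := liminf_le_limsup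
    _ ≤ _ := h1
/-- Γ-liminf inequality for the descending slopes: if `K`-geodesically convex lower
semicontinuous functionals `E_n` Γ-converge to the `K`-geodesically convex functional `E∞`,
then for every `x ∈ D(E∞)` and every `x_n → x` one has
`|∂⁻E∞|(x) ≤ liminf_n |∂⁻E_n|(x_n)`. -/
theorem descendingSlope_gammaLiminf {X : Type*} [MetricSpace X] (K : ℝ)
    (E : ℕ → X → EReal) (Einf : X → EReal)
    (hbot : ∀ n x, E n x ≠ ⊥) (hbotinf : ∀ x, Einf x ≠ ⊥)
    (hKconv : ∀ n, KGeodConvex K (E n)) (hlsc : ∀ n, LowerSemicontinuous (E n))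
    (hKconvinf : KGeodConvex K Einf)
    (hgamma : gammaLiminf E = Einf ∧ gammaLimsup E = Einf)
    (x : X) (hx : Einf x ≠ ⊤) (u : ℕ → X) (hu : Tendsto u atTop (𝓝 x)) :
    descendingSlope Einf x ≤ Filter.liminf (fun n => descendingSlope (E n) (u n)) atTop := by
  obtain ⟨hgl, hgs⟩ := hgamma
  set L := Filter.liminf (fun n => descendingSlope (E n) (u n)) atTop with hL
  set a := (Einf x).toReal with ha
  have hEx : Einf x = (a : EReal) := (EReal.coe_toReal hx (hbotinf x)).symm
  have hliminf_u : (a : EReal) ≤ Filter.liminf (fun n => E n (u n)) atTop := by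
    rw [← hEx, ← congrFun hgl x, gammaLiminf]
    exact iInf₂_le u hu
  have key : ∀ y : X, y ≠ x → Einf y ≠ ⊤ →
      ENNReal.ofReal ((a - (Einf y).toReal) / dist x y + K / 2 * dist x y) ≤ L := by
    intro y hyx hytop
    set b := (Einf y).toReal with hb
    have hEy : Einf y = (b : EReal) := (EReal.coe_toReal hytop (hbotinf y)).symm
    set d := dist x y with hdd
    have hd0 : 0 < d := dist_pos.mpr (Ne.symm hyx)
    set r := (a - b) / d + K / 2 * d with hr
    have step : ∀ δ : ℝ, 0 < δ → ENNReal.ofReal (r - δ) ≤ L := by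
      intro δ hδ
      set ε := δ * d / 2 with hε
      have hε0 : 0 < ε := by positivity
      -- recovery sequence
      have h1 : gammaLimsup E y < ((b + ε : ℝ) : EReal) := by
        rw [congrFun hgs y, hEy]
        exact_mod_cast (by linarith : b < b + ε)
      rw [gammaLimsup] at h1
      obtain ⟨v, hv⟩ := iInf_lt_iff.mp h1
      obtain ⟨hvt, hv2⟩ := iInf_lt_iff.mp hv
      have hA : ∀ᶠ n in atTop, ((a - ε : ℝ) : EReal) < E n (u n) :=
        eventually_lt_of_lt_liminf
          (lt_of_lt_of_le (by exact_mod_cast (by linarith : a - ε < a)) hliminf_u)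
      have hB : ∀ᶠ n in atTop, E n (v n) < ((b + ε : ℝ) : EReal) :=
        eventually_lt_of_limsup_lt hv2
      have hdist : Tendsto (fun n => dist (u n) (v n)) atTop (𝓝 d) := hu.dist hvt
      have hdpos : ∀ᶠ n in atTop, 0 < dist (u n) (v n) :=
        hdist.eventually (eventually_gt_nhds hd0)
      have hSn : ∀ᶠ n in atTop,
          ENNReal.ofReal ((a - b - 2 * ε) / dist (u n) (v n) + K / 2 * dist (u n) (v n))
            ≤ descendingSlope (E n) (u n) := by
        filter_upwards [hA, hB, hdpos] with n hAn hBn hdn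
        by_cases htop : E n (u n) = ⊤
        · rw [descendingSlope, if_pos htop]; exact le_top
        have hvtop : E n (v n) ≠ ⊤ := ne_top_of_lt hBn
        have hneq : u n ≠ v n := by
          intro h; rw [h, dist_self] at hdn; exact lt_irrefl _ hdn
        refine le_trans (ENNReal.ofReal_le_ofReal ?_)
          (slope_ge_of_KGeodConvex (hKconv n) (hbot n) htop hvtop hneq)
        have h1' : a - ε ≤ (E n (u n)).toReal := by
          have := EReal.toReal_le_toReal hAn.le (EReal.coe_ne_bot _) htop
          rwa [EReal.toReal_coe] at this
        have h2' : (E n (v n)).toReal ≤ b + ε := by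
          have := EReal.toReal_le_toReal hBn.le (hbot n (v n)) (EReal.coe_ne_top _)
          rwa [EReal.toReal_coe] at this
        have h3' : a - b - 2 * ε ≤ (E n (u n)).toReal - (E n (v n)).toReal := by linarith
        gcongr
      have hlim : Tendsto
          (fun n => ENNReal.ofReal ((a - b - 2 * ε) / dist (u n) (v n)
            + K / 2 * dist (u n) (v n))) atTop
          (𝓝 (ENNReal.ofReal ((a - b - 2 * ε) / d + K / 2 * d))) := by
        apply (ENNReal.continuous_ofReal.tendsto _).comp
        exact (tendsto_const_nhds.div hdist hd0.ne').add (hdist.const_mul _)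
      have hres : ENNReal.ofReal ((a - b - 2 * ε) / d + K / 2 * d) ≤ L := by
        rw [← hlim.liminf_eq]
        exact Filter.liminf_le_liminf hSn
      have : r - δ = (a - b - 2 * ε) / d + K / 2 * d := by
        rw [hr, hε]; field_simp; ring
      rw [this]; exact hres
    have htend0 : Tendsto (fun k : ℕ => ENNReal.ofReal (r - ((k : ℝ) + 1)⁻¹)) atTop
        (𝓝 (ENNReal.ofReal r)) := by
      apply (ENNReal.continuous_ofReal.tendsto _).comp
      have : Tendsto (fun k : ℕ => ((k : ℝ) + 1)⁻¹) atTop (𝓝 0) :=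
        Tendsto.inv_tendsto_atTop (tendsto_atTop_add_const_right _ _ tendsto_natCast_atTop_atTop)
      simpa using tendsto_const_nhds.sub this
    exact le_of_tendsto htend0 (Eventually.of_forall fun k => step _ (by positivity))
  -- conclude
  rw [descendingSlope, if_neg hx]
  apply ENNReal.le_of_forall_pos_le_add
  intro ε hε hLtop
  set ε' : ℝ := (ε : ℝ) / (|K| + 1) with hε'
  have hε'0 : 0 < ε' := by positivity
  have hball : ∀ᶠ y in 𝓝[≠] x, dist y x < ε' :=
    (eventually_nhdsWithin_of_eventually_nhds
      ((Metric.ball_mem_nhds x hε'0) : ∀ᶠ y in 𝓝 x, y ∈ Metric.ball x ε'))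
  refine Filter.limsup_le_of_le (by isBoundedDefault) ?_
  filter_upwards [hball, self_mem_nhdsWithin] with y hy1 (hy2 : y ≠ x)
  by_cases hytop : Einf y = ⊤
  · rw [hEx, hytop, EReal.sub_top]
    simp
  · have hk := key y hy2 hytop
    have hsub : (Einf x - Einf y).toReal = a - (Einf y).toReal :=
      EReal.toReal_sub hx (hbotinf x) hytop (hbotinf y)
    rw [hsub]
    have hd0 : 0 < dist x y := dist_pos.mpr (Ne.symm hy2)
    have hstep1 : (a - (Einf y).toReal) / dist x y
        ≤ ((a - (Einf y).toReal) / dist x y + K / 2 * dist x y) + |K| / 2 * dist x y := by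
      nlinarith [neg_abs_le K, hd0.le]
    refine le_trans (ENNReal.ofReal_le_ofReal hstep1) ?_
    refine le_trans (ENNReal.ofReal_add_le) ?_
    refine add_le_add hk ?_
    have : |K| / 2 * dist x y ≤ (ε : ℝ) := by
      rw [dist_comm] at hy1
      have h1 : |K| / 2 * dist x y ≤ |K| / 2 * ε' := by
        gcongr
      have h2 : |K| / 2 * ε' ≤ (ε : ℝ) := by
        rw [hε', div_mul_div_comm]
        rw [div_le_iff₀ (by positivity : (0:ℝ) < 2 * (|K| + 1))]
        nlinarith [abs_nonneg K, NNReal.coe_nonneg ε]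
      linarith
    calc ENNReal.ofReal (|K| / 2 * dist x y) ≤ ENNReal.ofReal (ε : ℝ) :=
          ENNReal.ofReal_le_ofReal this
      _ = (ε : ℝ≥0∞) := by
          rw [ENNReal.ofReal_coe_nnreal]
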